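/- Let q be a positive integer, a ∈ ℝ^q, b ∈ ℝ, u ∈ ℤ^q, and let δ > 0. Let (T, U) be a partition of {1,…,q}. Define β = (b − Σ_{j∈U} a_j u_j)/δ, f = β − ⌊β⌋, and for any d ∈ ℝ set f_d = d − ⌊d⌋ and G(d) = ⌊d⌋ + max(f_d − f, 0)/(1 − f). Then for every (s, z) ∈ ℝ × ℤ^q with s ≥ 0, 0 ≤ z_j ≤ u_j for all j, and Σ_{j=1}^q a_j z_j ≤ b + s, the complemented mixed-integer-rounding (c-MIR) inequality holds: Σ_{j∈T} G(a_j/δ) z_j + Σ_{j∈U} G(−a_j/δ)(u_j − z_j) ≤ ⌊β⌋ + s/(δ(1 − f)). -/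

import Mathlib

lemma mir_aux {ι : Type*} (J : Finset ι) (d : ι → ℝ) (w : ι → ℤ)
    (hw : ∀ i ∈ J, 0 ≤ w i) (β f : ℝ) (hf : f = β - (⌊β⌋ : ℝ))
    (s' : ℝ) (hs' : 0 ≤ s')
    (hsum : ∑ i ∈ J, d i * (w i : ℝ) ≤ β + s') :
    ∑ i ∈ J, ((⌊d i⌋ : ℝ) + max (d i - (⌊d i⌋ : ℝ) - f) 0 / (1 - f)) * (w i : ℝ) ≤
      (⌊β⌋ : ℝ) + s' / (1 - f) := by
  classical
  have hf0 : 0 ≤ f := by rw [hf]; linarith [Int.floor_le β]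
  have hf1 : 0 < 1 - f := by rw [hf]; linarith [Int.lt_floor_add_one β]
  have hβB : β = (⌊β⌋ : ℝ) + f := by rw [hf]; ring
  set J2 := J.filter (fun i => f < d i - (⌊d i⌋ : ℝ)) with hJ2
  set A : ℝ := ∑ i ∈ J, (⌊d i⌋ : ℝ) * (w i : ℝ) with hA
  set S : ℝ := ∑ i ∈ J, max (d i - (⌊d i⌋ : ℝ) - f) 0 * (w i : ℝ) with hSdef
  set M : ℝ := ∑ i ∈ J2, (w i : ℝ) with hM
  have hJ2sub : J2 ⊆ J := Finset.filter_subset _ _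
  have hM0 : 0 ≤ M := Finset.sum_nonneg fun i hi => by exact_mod_cast hw i (hJ2sub hi)
  have hS : S = ∑ i ∈ J2, (d i - (⌊d i⌋ : ℝ) - f) * (w i : ℝ) := by
    rw [hSdef, hJ2, Finset.sum_filter]
    apply Finset.sum_congr rfl; intro i _
    by_cases h : f < d i - (⌊d i⌋ : ℝ)
    · rw [if_pos h, max_eq_left (by linarith)]
    · rw [if_neg h, max_eq_right (by push_neg at h; linarith), zero_mul]
  have hE2 : S ≤ (1 - f) * M := by
    rw [hS, hM, Finset.mul_sum]
    apply Finset.sum_le_sum; intro i hi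
    have hw' : (0:ℝ) ≤ (w i : ℝ) := by exact_mod_cast hw i (hJ2sub hi)
    have h1 : d i - (⌊d i⌋ : ℝ) < 1 := by linarith [Int.lt_floor_add_one (d i)]
    nlinarith
  have hE3 : A + S + f * M ≤ β + s' := by
    have h1 : A + (S + f * M) = A + ∑ i ∈ J2, (d i - (⌊d i⌋ : ℝ)) * (w i : ℝ) := by
      rw [hS, hM, Finset.mul_sum, ← Finset.sum_add_distrib]
      congr 1; apply Finset.sum_congr rfl; intro i _; ring
    have h2 : ∑ i ∈ J2, (d i - (⌊d i⌋ : ℝ)) * (w i : ℝ) ≤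
        ∑ i ∈ J, (d i - (⌊d i⌋ : ℝ)) * (w i : ℝ) := by
      apply Finset.sum_le_sum_of_subset_of_nonneg hJ2sub
      intro i hi _
      have hw' : (0:ℝ) ≤ (w i : ℝ) := by exact_mod_cast hw i hi
      have := Int.floor_le (d i)
      nlinarith
    have h3 : A + ∑ i ∈ J, (d i - (⌊d i⌋ : ℝ)) * (w i : ℝ) = ∑ i ∈ J, d i * (w i : ℝ) := by
      rw [hA, ← Finset.sum_add_distrib]
      apply Finset.sum_congr rfl; intro i _; ring
    linarith
  obtain ⟨N, hN⟩ : ∃ N : ℤ, (N : ℝ) = A + M := by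
    refine ⟨(∑ i ∈ J, ⌊d i⌋ * w i) + ∑ i ∈ J2, w i, ?_⟩
    rw [hA, hM]; push_cast; ring
  have key : (1 - f) * (A - (⌊β⌋ : ℝ)) + S ≤ s' := by
    rcases le_or_gt N ⌊β⌋ with h | h
    · have hNR : A + M ≤ (⌊β⌋ : ℝ) := by rw [← hN]; exact_mod_cast h
      have hint : (1 - f) * (A - (⌊β⌋ : ℝ)) ≤ (1 - f) * (-M) :=
        mul_le_mul_of_nonneg_left (by linarith) hf1.le
      nlinarith
    · have hNR : (⌊β⌋ : ℝ) + 1 ≤ A + M := by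
        rw [← hN]
        have : (⌊β⌋ : ℤ) + 1 ≤ N := h
        exact_mod_cast this
      have hint : 0 ≤ f * (A + M - (⌊β⌋ : ℝ) - 1) :=
        mul_nonneg hf0 (by linarith)
      nlinarith
  have hLHS : ∑ i ∈ J, ((⌊d i⌋ : ℝ) + max (d i - (⌊d i⌋ : ℝ) - f) 0 / (1 - f)) * (w i : ℝ)
      = A + S / (1 - f) := by
    rw [hA, hSdef, Finset.sum_div, ← Finset.sum_add_distrib]
    apply Finset.sum_congr rfl; intro i _; ring
  rw [hLHS, ← sub_nonneg]
  have heq : (⌊β⌋ : ℝ) + s' / (1 - f) - (A + S / (1 - f))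
      = ((s' - S) - (1 - f) * (A - (⌊β⌋ : ℝ))) / (1 - f) := by
    field_simp; ring
  rw [heq]
  exact div_nonneg (by linarith) hf1.le

/-- Validity of the complemented mixed-integer-rounding (c-MIR) inequality for the
mixed knapsack set. -/
theorem cmir_inequality_valid
    (q : ℕ) (hq : 0 < q)
    (a : Fin q → ℝ) (b : ℝ) (u : Fin q → ℤ)
    (δ : ℝ) (hδ : 0 < δ)
    (T U : Finset (Fin q)) (hTU : T ∪ U = Finset.univ) (hdisj : T ∩ U = ∅)
    (β f : ℝ)
    (hβ : β = (b - ∑ j ∈ U, a j * (u j : ℝ)) / δ)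
    (hf : f = β - (⌊β⌋ : ℝ))
    (G : ℝ → ℝ)
    (hG : ∀ d : ℝ, G d = (⌊d⌋ : ℝ) + max (d - (⌊d⌋ : ℝ) - f) 0 / (1 - f))
    (s : ℝ) (z : Fin q → ℤ)
    (hs : 0 ≤ s) (hz0 : ∀ j, 0 ≤ z j) (hzu : ∀ j, z j ≤ u j)
    (hknap : ∑ j, a j * (z j : ℝ) ≤ b + s) :
    ∑ j ∈ T, G (a j / δ) * (z j : ℝ) +
      ∑ j ∈ U, G (-a j / δ) * ((u j : ℝ) - (z j : ℝ)) ≤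
      (⌊β⌋ : ℝ) + s / (δ * (1 - f)) := by
  classical
  have hdisjTU : Disjoint T U := Finset.disjoint_iff_inter_eq_empty.mpr hdisj
  have hUT : ∀ j ∈ U, j ∉ T := fun j hj => Finset.disjoint_right.mp hdisjTU hj
  set d : Fin q → ℝ := fun j => if j ∈ T then a j / δ else -a j / δ with hd
  set w : Fin q → ℤ := fun j => if j ∈ T then z j else u j - z j with hw
  have hw0 : ∀ j ∈ (Finset.univ : Finset (Fin q)), 0 ≤ w j := by
    intro j _
    by_cases h : j ∈ T
    · simp only [hw, if_pos h]; exact hz0 j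
    · simp only [hw, if_neg h]; have := hzu j; omega
  have hsplit : ∀ F : Fin q → ℝ, ∑ j, F j = ∑ j ∈ T, F j + ∑ j ∈ U, F j := fun F => by
    rw [← Finset.sum_union hdisjTU, hTU]
  have hsum_d : ∑ j, d j * (w j : ℝ) ≤ β + s / δ := by
    have h1 : ∑ j, d j * (w j : ℝ)
        = (∑ j ∈ T, a j * (z j : ℝ) + ∑ j ∈ U, a j * (z j : ℝ)
            - ∑ j ∈ U, a j * (u j : ℝ)) / δ := by
      rw [hsplit (fun j => d j * (w j : ℝ))]
      have e1 : ∑ j ∈ T, d j * (w j : ℝ) = ∑ j ∈ T, (a j * (z j : ℝ)) / δ := by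
        apply Finset.sum_congr rfl; intro j hj
        simp only [hd, hw, if_pos hj]; ring
      have e2 : ∑ j ∈ U, d j * (w j : ℝ)
          = ∑ j ∈ U, (a j * (z j : ℝ) - a j * (u j : ℝ)) / δ := by
        apply Finset.sum_congr rfl; intro j hj
        simp only [hd, hw, if_neg (hUT j hj)]
        push_cast
        field_simp
        ring
      rw [e1, e2, ← Finset.sum_div, ← Finset.sum_div, Finset.sum_sub_distrib,
        ← add_div]
      ring_nf
    rw [h1, hβ, ← add_div]
    gcongr
    have := hsplit (fun j => a j * (z j : ℝ))
    linarith
  have H := mir_aux Finset.univ d w hw0 β f hf (s / δ) (div_nonneg hs hδ.le) hsum_d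
  have hLHSeq : ∑ j ∈ T, G (a j / δ) * (z j : ℝ) +
      ∑ j ∈ U, G (-a j / δ) * ((u j : ℝ) - (z j : ℝ))
      = ∑ j, ((⌊d j⌋ : ℝ) + max (d j - (⌊d j⌋ : ℝ) - f) 0 / (1 - f)) * (w j : ℝ) := by
    rw [hsplit (fun j => ((⌊d j⌋ : ℝ) + max (d j - (⌊d j⌋ : ℝ) - f) 0 / (1 - f)) * (w j : ℝ))]
    congr 1
    · apply Finset.sum_congr rfl; intro j hj
      simp only [hd, hw, if_pos hj, hG]
    · apply Finset.sum_congr rfl; intro j hj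
      simp only [hd, hw, if_neg (hUT j hj), hG]
      push_cast
      ring
  rw [hLHSeq, ← div_div]
  exact H
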